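/- If (M,χ) is a module of the system with organizing structure ψ, then Pr(T_C = T_M) = ∑_{A⊆C∖M} q_[M](A)·Δ_[M]ψ(A). -/
import Mathlib


open MeasureTheory Finset

/-- Lifetime of the (sub)system on component set `D` with structure function `χ`
(the maximum over the sets `A ⊆ D` with `χ A = 1` of `min_{i ∈ A} T i`). -/
noncomputable def sysLifeOn {Ω : Type*} {n : ℕ} (T : Fin n → Ω → ℝ)
    (D : Finset (Fin n)) (χ : Finset (Fin n) → ℝ) (ω : Ω) : ℝ :=
  if h : (D.powerset.filter fun A => χ A = 1).Nonempty then
    (D.powerset.filter fun A => χ A = 1).sup' h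
      (fun A => if hA : A.Nonempty then A.inf' hA fun i => T i ω else 0)
  else 0

/-- The `k`-th order statistic of the lifetimes `(T i)_{i ∈ M}`. -/
noncomputable def orderStat {Ω : Type*} {n : ℕ} (T : Fin n → Ω → ℝ)
    (M : Finset (Fin n)) (k : ℕ) (ω : Ω) : ℝ :=
  ((M.val.map fun i => T i ω).sort (· ≤ ·)).getD (k - 1) 0

/-- The relative quality function `q_j(A) = Pr(max_{i ∈ C∖A} T_i = T_j < min_{i ∈ A} T_i)`. -/
noncomputable def relQual {Ω : Type*} [MeasurableSpace Ω] {n : ℕ} (μ : Measure Ω)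
    (T : Fin n → Ω → ℝ) (j : Fin n) (A : Finset (Fin n)) : ℝ :=
  (μ {ω | (∀ i ∉ A, T i ω ≤ T j ω) ∧ ∀ i ∈ A, T j ω < T i ω}).toReal

/- In the statements about modules, a subset of the reduced component set
`C_M = (C∖M) ∪ {[M]}` is encoded as a pair consisting of a `Finset (Fin n)`
(its part in `C∖M`) and a `Bool` recording whether the macro-component `[M]`
belongs to it; thus the organizing structure is `ψ : Finset (Fin n) → Bool → ℝ`,
and `Δ_[M]ψ(B) = ψ B true - ψ B false`. -/
section Aux

variable {Ω : Type*} {n : ℕ} {T : Fin n → Ω → ℝ}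
variable {D : Finset (Fin n)} {χ : Finset (Fin n) → ℝ}

lemma sysLifeOn_filter_nonempty (hχfull : χ D = 1) :
    (D.powerset.filter fun A => χ A = 1).Nonempty :=
  ⟨D, by simp [Finset.mem_filter, hχfull]⟩

lemma le_sysLifeOn_iff (hχ01 : ∀ A, A ⊆ D → χ A = 0 ∨ χ A = 1)
    (hχmono : ∀ A B : Finset (Fin n), A ⊆ B → B ⊆ D → χ A ≤ χ B)
    (hχempty : χ ∅ = 0) (hχfull : χ D = 1) (ω : Ω) (t : ℝ) :
    t ≤ sysLifeOn T D χ ω ↔ χ (D.filter fun i => t ≤ T i ω) = 1 := by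
  have hF := sysLifeOn_filter_nonempty hχfull
  unfold sysLifeOn
  rw [dif_pos hF]
  constructor
  · intro h
    rw [Finset.le_sup'_iff] at h
    obtain ⟨A, hAF, hA⟩ := h
    rw [Finset.mem_filter, Finset.mem_powerset] at hAF
    obtain ⟨hAD, hAχ⟩ := hAF
    have hAne : A.Nonempty := by
      rw [Finset.nonempty_iff_ne_empty]
      rintro rfl
      rw [hχempty] at hAχ; norm_num at hAχ
    rw [dif_pos hAne, Finset.le_inf'_iff] at hA
    have hsub : A ⊆ D.filter fun i => t ≤ T i ω := fun i hi =>
      Finset.mem_filter.2 ⟨hAD hi, hA i hi⟩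
    have h1 := hχmono A _ hsub (Finset.filter_subset _ _)
    rcases hχ01 _ (Finset.filter_subset (fun i => t ≤ T i ω) D) with h0 | h0
    · rw [hAχ, h0] at h1; norm_num at h1
    · exact h0
  · intro h1
    have hne : (D.filter fun i => t ≤ T i ω).Nonempty := by
      rw [Finset.nonempty_iff_ne_empty]
      intro he
      rw [he, hχempty] at h1; norm_num at h1
    have hmem : (D.filter fun i => t ≤ T i ω) ∈ D.powerset.filter fun A => χ A = 1 := by
      rw [Finset.mem_filter, Finset.mem_powerset]
      exact ⟨Finset.filter_subset _ _, h1⟩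
    refine le_trans ?_ (Finset.le_sup' _ hmem)
    rw [dif_pos hne, Finset.le_inf'_iff]
    intro i hi
    exact (Finset.mem_filter.1 hi).2

lemma lt_sysLifeOn_iff (hχ01 : ∀ A, A ⊆ D → χ A = 0 ∨ χ A = 1)
    (hχmono : ∀ A B : Finset (Fin n), A ⊆ B → B ⊆ D → χ A ≤ χ B)
    (hχempty : χ ∅ = 0) (hχfull : χ D = 1) (ω : Ω) (t : ℝ) :
    t < sysLifeOn T D χ ω ↔ χ (D.filter fun i => t < T i ω) = 1 := by
  have hF := sysLifeOn_filter_nonempty hχfull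
  unfold sysLifeOn
  rw [dif_pos hF]
  constructor
  · intro h
    rw [Finset.lt_sup'_iff] at h
    obtain ⟨A, hAF, hA⟩ := h
    rw [Finset.mem_filter, Finset.mem_powerset] at hAF
    obtain ⟨hAD, hAχ⟩ := hAF
    have hAne : A.Nonempty := by
      rw [Finset.nonempty_iff_ne_empty]
      rintro rfl
      rw [hχempty] at hAχ; norm_num at hAχ
    rw [dif_pos hAne, Finset.lt_inf'_iff] at hA
    have hsub : A ⊆ D.filter fun i => t < T i ω := fun i hi =>
      Finset.mem_filter.2 ⟨hAD hi, hA i hi⟩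
    have h1 := hχmono A _ hsub (Finset.filter_subset _ _)
    rcases hχ01 _ (Finset.filter_subset (fun i => t < T i ω) D) with h0 | h0
    · rw [hAχ, h0] at h1; norm_num at h1
    · exact h0
  · intro h1
    have hne : (D.filter fun i => t < T i ω).Nonempty := by
      rw [Finset.nonempty_iff_ne_empty]
      intro he
      rw [he, hχempty] at h1; norm_num at h1
    have hmem : (D.filter fun i => t < T i ω) ∈ D.powerset.filter fun A => χ A = 1 := by
      rw [Finset.mem_filter, Finset.mem_powerset]
      exact ⟨Finset.filter_subset _ _, h1⟩
    refine lt_of_lt_of_le ?_ (Finset.le_sup' _ hmem)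
    rw [dif_pos hne, Finset.lt_inf'_iff]
    intro i hi
    exact (Finset.mem_filter.1 hi).2

lemma sysLifeOn_attained (hχempty : χ ∅ = 0) (hχfull : χ D = 1) (ω : Ω) :
    ∃ j ∈ D, sysLifeOn T D χ ω = T j ω := by
  have hF := sysLifeOn_filter_nonempty hχfull
  unfold sysLifeOn
  rw [dif_pos hF]
  obtain ⟨A, hA, heq⟩ := Finset.exists_mem_eq_sup' hF
    (fun A => if hA : A.Nonempty then A.inf' hA fun i => T i ω else 0)
  rw [Finset.mem_filter, Finset.mem_powerset] at hA
  have hAne : A.Nonempty := by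
    rw [Finset.nonempty_iff_ne_empty]
    rintro rfl
    rw [hχempty] at hA; norm_num at hA
  obtain ⟨j, hj, heq2⟩ := Finset.exists_mem_eq_inf' hAne (fun i => T i ω)
  exact ⟨j, hA.1 hj, by rw [heq, dif_pos hAne, heq2]⟩

lemma measurable_sysLifeOn [MeasurableSpace Ω] (hT : ∀ i, Measurable (T i)) :
    Measurable fun ω => sysLifeOn T D χ ω := by
  classical
  unfold sysLifeOn
  by_cases h : (D.powerset.filter fun A => χ A = 1).Nonempty
  · simp only [dif_pos h]
    have key : Measurable ((D.powerset.filter fun A => χ A = 1).sup' h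
        (fun A ω => if hA : A.Nonempty then A.inf' hA fun i => T i ω else 0)) := by
      refine Finset.measurable_sup' h ?_
      intro A _
      by_cases hA : A.Nonempty
      · simp only [dif_pos hA]
        have h2 : Measurable (A.inf' hA T) :=
          Finset.inf'_induction hA T (p := Measurable) (fun f hf g hg => hf.inf hg)
            (fun i _ => hT i)
        convert h2 using 1
        funext ω
        rw [Finset.inf'_apply]
      · simp only [dif_neg hA]; exact measurable_const
    convert key using 1
    funext ω
    rw [Finset.sup'_apply]
  · simp only [dif_neg h]; exact measurable_const

end Aux

set_option maxHeartbeats 1000000 in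
theorem stmt_14 {Ω : Type*} [MeasurableSpace Ω] (μ : Measure Ω) [IsProbabilityMeasure μ]
    {n : ℕ} (T : Fin n → Ω → ℝ) (hTmeas : ∀ i, Measurable (T i))
    (hTnonneg : ∀ i ω, 0 ≤ T i ω)
    (hties : ∀ i j : Fin n, i ≠ j → μ {ω | T i ω = T j ω} = 0)
    (φ : Finset (Fin n) → ℝ)
    (hφ01 : ∀ A, φ A = 0 ∨ φ A = 1)
    (hφmono : ∀ A B : Finset (Fin n), A ⊆ B → φ A ≤ φ B)
    (hφempty : φ ∅ = 0) (hφfull : φ Finset.univ = 1)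
    (M : Finset (Fin n)) (hM : M.Nonempty)
    (χ : Finset (Fin n) → ℝ) (ψ : Finset (Fin n) → Bool → ℝ)
    (hχ01 : ∀ A, A ⊆ M → χ A = 0 ∨ χ A = 1)
    (hχmono : ∀ A B : Finset (Fin n), A ⊆ B → B ⊆ M → χ A ≤ χ B)
    (hχempty : χ ∅ = 0) (hχfull : χ M = 1)
    (hψ01 : ∀ B b, B ⊆ Finset.univ \ M → ψ B b = 0 ∨ ψ B b = 1)
    (hψmono : ∀ (B B' : Finset (Fin n)) (b b' : Bool), B ⊆ B' → B' ⊆ Finset.univ \ M →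
      (b = true → b' = true) → ψ B b ≤ ψ B' b')
    (hψempty : ψ ∅ false = 0) (hψfull : ψ (Finset.univ \ M) true = 1)
    (hmod : ∀ A : Finset (Fin n),
      φ A = ψ (A \ M) (if χ (A ∩ M) = 1 then true else false)) :
    (μ {ω | sysLifeOn T Finset.univ φ ω = sysLifeOn T M χ ω}).toReal =
      ∑ B ∈ ((Finset.univ : Finset (Fin n)) \ M).powerset,
        (μ {ω | (∀ i, i ∉ M → i ∉ B → T i ω < sysLifeOn T M χ ω) ∧
              ∀ i ∈ B, sysLifeOn T M χ ω < T i ω}).toReal *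
          (ψ B true - ψ B false) := by
  classical
  have hφ01' : ∀ A : Finset (Fin n), A ⊆ Finset.univ → φ A = 0 ∨ φ A = 1 :=
    fun A _ => hφ01 A
  have hφmono' : ∀ A B : Finset (Fin n), A ⊆ B → B ⊆ Finset.univ → φ A ≤ φ B :=
    fun A B h _ => hφmono A B h
  set g : Ω → ℝ := sysLifeOn T M χ with hg
  have hgmeas : Measurable g := by
    rw [hg]; exact measurable_sysLifeOn hTmeas
  set E : Finset (Fin n) → Set Ω := fun B =>
    {ω | (∀ i, i ∉ M → i ∉ B → T i ω < g ω) ∧ ∀ i ∈ B, g ω < T i ω} with hE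
  set S : Set Ω := {ω | sysLifeOn T Finset.univ φ ω = g ω} with hS
  set pows := ((Finset.univ : Finset (Fin n)) \ M).powerset with hpows
  set K := pows.filter (fun B => ψ B true = 1 ∧ ψ B false = 0) with hK
  -- measurability of the events
  have hEmeas : ∀ B : Finset (Fin n), MeasurableSet (E B) := by
    intro B
    rw [hE]
    have h1 : MeasurableSet {ω | ∀ i, i ∉ M → i ∉ B → T i ω < g ω} := by
      rw [Set.setOf_forall]
      refine MeasurableSet.iInter fun i => ?_
      rcases Classical.em (i ∉ M ∧ i ∉ B) with h | h
      · have heq : {ω | i ∉ M → i ∉ B → T i ω < g ω} = {ω | T i ω < g ω} := by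
          ext ω; simp [h.1, h.2]
        rw [heq]; exact measurableSet_lt (hTmeas i) hgmeas
      · have heq : {ω | i ∉ M → i ∉ B → T i ω < g ω} = Set.univ := by
          ext ω
          simp only [Set.mem_setOf_eq, Set.mem_univ, iff_true]
          intro h1 h2
          exact absurd ⟨h1, h2⟩ h
        rw [heq]; exact MeasurableSet.univ
    have h2 : MeasurableSet {ω | ∀ i ∈ B, g ω < T i ω} := by
      rw [Set.setOf_forall]
      refine MeasurableSet.iInter fun i => ?_
      rcases Classical.em (i ∈ B) with h | h
      · have heq : {ω | i ∈ B → g ω < T i ω} = {ω | g ω < T i ω} := by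
          ext ω; simp [h]
        rw [heq]; exact measurableSet_lt hgmeas (hTmeas i)
      · have heq : {ω | i ∈ B → g ω < T i ω} = Set.univ := by
          ext ω; simp [h]
        rw [heq]; exact MeasurableSet.univ
    exact h1.inter h2
  -- the null set of ties
  set N : Set Ω := ⋃ i, ⋃ j, {ω | i ≠ j ∧ T i ω = T j ω} with hN
  have hNnull : μ N = 0 := by
    rw [hN]
    refine measure_iUnion_null fun i => measure_iUnion_null fun j => ?_
    by_cases hij : i = j
    · have : {ω | i ≠ j ∧ T i ω = T j ω} = ∅ := by
        ext ω; simp [hij]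
      rw [this, measure_empty]
    · exact measure_mono_null (fun ω hω => hω.2) (hties i j hij)
  -- the module lifetime is attained at a component of M
  have hgM : ∀ ω : Ω, ∃ j ∈ M, g ω = T j ω := by
    intro ω
    rw [hg]
    exact sysLifeOn_attained hχempty hχfull ω
  -- pointwise: ω always belongs to the event of its own "better set"
  have hmemBs : ∀ ω : Ω, (∀ i j : Fin n, i ≠ j → T i ω ≠ T j ω) →
      ω ∈ E ((Finset.univ \ M).filter fun i => g ω < T i ω) := by
    intro ω hd
    obtain ⟨j, hjM, hj⟩ := hgM ω
    rw [hE]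
    refine ⟨fun i hiM hiB => ?_, fun i hi => (Finset.mem_filter.1 hi).2⟩
    have hnlt : ¬ g ω < T i ω := fun hlt =>
      hiB (Finset.mem_filter.2 ⟨Finset.mem_sdiff.2 ⟨Finset.mem_univ i, hiM⟩, hlt⟩)
    have hne : T i ω ≠ g ω := by
      rw [hj]
      exact hd i j (fun h => hiM (h ▸ hjM))
    exact lt_of_le_of_ne (not_lt.1 hnlt) hne
  -- pointwise: membership in an event determines the set
  have hEB_eq : ∀ ω : Ω, ∀ B : Finset (Fin n), B ⊆ Finset.univ \ M →
      ω ∈ E B → B = (Finset.univ \ M).filter fun i => g ω < T i ω := by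
    intro ω B hB hωB
    rw [hE] at hωB
    obtain ⟨h1, h2⟩ := hωB
    ext i
    simp only [Finset.mem_filter, Finset.mem_sdiff, Finset.mem_univ, true_and]
    constructor
    · intro hi
      have hiM : i ∉ M := (Finset.mem_sdiff.1 (hB hi)).2
      exact ⟨hiM, h2 i hi⟩
    · rintro ⟨hiM, hlt⟩
      by_contra hiB
      exact absurd (h1 i hiM hiB) (not_lt.2 (le_of_lt hlt))
  -- events are pairwise disjoint
  have hdisj : ∀ B : Finset (Fin n), B ⊆ Finset.univ \ M →
      ∀ B' : Finset (Fin n), B' ⊆ Finset.univ \ M → B ≠ B' →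
      Disjoint (E B) (E B') := by
    intro B hB B' hB' hne
    rw [Set.disjoint_left]
    intro ω hωB hωB'
    rw [hE] at hωB hωB'
    have hex : ∃ i, (i ∈ B ∧ i ∉ B') ∨ (i ∈ B' ∧ i ∉ B) := by
      by_contra h
      push_neg at h
      exact hne (Finset.ext fun i => ⟨(h i).1, (h i).2⟩)
    obtain ⟨i, hi | hi⟩ := hex
    · have hlt1 := hωB.2 i hi.1
      have hiM : i ∉ M := (Finset.mem_sdiff.1 (hB hi.1)).2
      have hlt2 := hωB'.1 i hiM hi.2
      exact absurd hlt1 (not_lt.2 (le_of_lt hlt2))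
    · have hlt1 := hωB'.2 i hi.1
      have hiM : i ∉ M := (Finset.mem_sdiff.1 (hB' hi.1)).2
      have hlt2 := hωB.1 i hiM hi.2
      exact absurd hlt1 (not_lt.2 (le_of_lt hlt2))
  -- the key pointwise characterization
  have hkey : ∀ ω : Ω, (∀ i j : Fin n, i ≠ j → T i ω ≠ T j ω) →
      (sysLifeOn T Finset.univ φ ω = g ω ↔
        (ψ ((Finset.univ \ M).filter fun i => g ω < T i ω) true = 1 ∧
         ψ ((Finset.univ \ M).filter fun i => g ω < T i ω) false = 0)) := by
    intro ω hd
    obtain ⟨j, hjM, hj⟩ := hgM ω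
    set m := g ω with hm
    set Bs := (Finset.univ \ M).filter fun i => m < T i ω with hBs
    have hBssub : Bs ⊆ Finset.univ \ M := Finset.filter_subset _ _
    have step1 : sysLifeOn T Finset.univ φ ω = m ↔
        (m ≤ sysLifeOn T Finset.univ φ ω ∧ ¬ m < sysLifeOn T Finset.univ φ ω) := by
      constructor
      · intro h; rw [h]; exact ⟨le_refl m, lt_irrefl m⟩
      · rintro ⟨h1, h2⟩; exact le_antisymm (not_lt.1 h2) h1
    rw [step1, le_sysLifeOn_iff hφ01' hφmono' hφempty hφfull,
        lt_sysLifeOn_iff hφ01' hφmono' hφempty hφfull]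
    have hne : ∀ i, i ∉ M → T i ω ≠ m := by
      intro i hiM
      rw [hj]
      exact hd i j (fun h => hiM (h ▸ hjM))
    have hSm_sdiff : (Finset.univ.filter fun i => m ≤ T i ω) \ M = Bs := by
      rw [hBs]
      ext i
      simp only [Finset.mem_sdiff, Finset.mem_filter, Finset.mem_univ, true_and]
      constructor
      · rintro ⟨hle, hiM⟩
        exact ⟨hiM, lt_of_le_of_ne hle (Ne.symm (hne i hiM))⟩
      · rintro ⟨hiM, hlt⟩
        exact ⟨le_of_lt hlt, hiM⟩
    have hSgt_sdiff : (Finset.univ.filter fun i => m < T i ω) \ M = Bs := by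
      rw [hBs]
      ext i
      simp only [Finset.mem_sdiff, Finset.mem_filter, Finset.mem_univ, true_and]
      tauto
    have hint1 : (Finset.univ.filter fun i => m ≤ T i ω) ∩ M
        = M.filter fun i => m ≤ T i ω := by
      ext i
      simp only [Finset.mem_inter, Finset.mem_filter, Finset.mem_univ, true_and]
      tauto
    have hint2 : (Finset.univ.filter fun i => m < T i ω) ∩ M
        = M.filter fun i => m < T i ω := by
      ext i
      simp only [Finset.mem_inter, Finset.mem_filter, Finset.mem_univ, true_and]
      tauto
    have hχ1 : χ (M.filter fun i => m ≤ T i ω) = 1 := by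
      refine (le_sysLifeOn_iff hχ01 hχmono hχempty hχfull ω m).1 ?_
      rw [hm, hg]
    have hχ0 : χ (M.filter fun i => m < T i ω) = 0 := by
      have hnlt : ¬ m < sysLifeOn T M χ ω := by
        rw [hm, hg]
        exact lt_irrefl _
      rw [lt_sysLifeOn_iff hχ01 hχmono hχempty hχfull ω m] at hnlt
      rcases hχ01 _ (Finset.filter_subset (fun i => m < T i ω) M) with h | h
      · exact h
      · exact absurd h hnlt
    rw [hmod (Finset.univ.filter fun i => m ≤ T i ω),
        hmod (Finset.univ.filter fun i => m < T i ω),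
        hSm_sdiff, hSgt_sdiff, hint1, hint2, hχ1, hχ0]
    have hite1 : (if (1:ℝ) = 1 then true else false) = true := by norm_num
    have hite0 : (if (0:ℝ) = 1 then true else false) = false := by norm_num
    rw [hite1, hite0]
    constructor
    · rintro ⟨h1, h2⟩
      refine ⟨h1, ?_⟩
      rcases hψ01 Bs false hBssub with h | h
      · exact h
      · exact absurd h h2
    · rintro ⟨h1, h2⟩
      refine ⟨h1, ?_⟩
      rw [h2]
      norm_num
  -- a.e. identification of the target event with the union
  have hiffSU : ∀ ω : Ω, ω ∉ N → (ω ∈ S ↔ ω ∈ ⋃ B ∈ K, E B) := by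
    intro ω hωN
    have hd : ∀ i j : Fin n, i ≠ j → T i ω ≠ T j ω := by
      intro i j hij heq
      exact hωN (Set.mem_iUnion.2 ⟨i, Set.mem_iUnion.2 ⟨j, ⟨hij, heq⟩⟩⟩)
    rw [hS, Set.mem_setOf_eq]
    constructor
    · intro hωS
      have hc := (hkey ω hd).1 hωS
      have hmem : ((Finset.univ \ M).filter fun i => g ω < T i ω) ∈ K := by
        rw [hK, Finset.mem_filter]
        exact ⟨by rw [hpows]; exact Finset.mem_powerset.2 (Finset.filter_subset _ _), hc⟩
      exact Set.mem_iUnion₂.2 ⟨_, hmem, hmemBs ω hd⟩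
    · intro hωU
      obtain ⟨B, hBK, hωB⟩ := Set.mem_iUnion₂.1 hωU
      rw [hK, Finset.mem_filter, hpows, Finset.mem_powerset] at hBK
      have hBeq := hEB_eq ω B hBK.1 hωB
      rw [hkey ω hd, ← hBeq]
      exact hBK.2
  have hae : S =ᵐ[μ] ⋃ B ∈ K, E B := by
    rw [MeasureTheory.ae_eq_set]
    constructor
    · refine measure_mono_null (fun ω hω => ?_) hNnull
      by_contra hωN
      exact hω.2 ((hiffSU ω hωN).1 hω.1)
    · refine measure_mono_null (fun ω hω => ?_) hNnull
      by_contra hωN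
      exact hω.2 ((hiffSU ω hωN).2 hω.1)
  have hKsub : ∀ B ∈ K, B ⊆ Finset.univ \ M := by
    intro B hB
    rw [hK, Finset.mem_filter, hpows, Finset.mem_powerset] at hB
    exact hB.1
  have hU : μ (⋃ B ∈ K, E B) = ∑ B ∈ K, μ (E B) := by
    refine measure_biUnion_finset ?_ fun B _ => hEmeas B
    intro B hB B' hB' hne
    exact hdisj B (hKsub B hB) B' (hKsub B' hB') hne
  have hsplit : (∑ B ∈ pows, (μ (E B)).toReal * (ψ B true - ψ B false))
      = ∑ B ∈ K, (μ (E B)).toReal := by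
    rw [← Finset.sum_filter_add_sum_filter_not pows
      (fun B => ψ B true = 1 ∧ ψ B false = 0)
      (fun B => (μ (E B)).toReal * (ψ B true - ψ B false))]
    have h1 : ∑ B ∈ K, (μ (E B)).toReal * (ψ B true - ψ B false)
        = ∑ B ∈ K, (μ (E B)).toReal := by
      refine Finset.sum_congr rfl fun B hB => ?_
      rw [hK, Finset.mem_filter] at hB
      obtain ⟨ht, hf⟩ := hB.2
      rw [ht, hf]
      ring
    have h2 : ∑ B ∈ pows.filter (fun B => ¬(ψ B true = 1 ∧ ψ B false = 0)),
        (μ (E B)).toReal * (ψ B true - ψ B false) = 0 := by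
      refine Finset.sum_eq_zero fun B hB => ?_
      rw [Finset.mem_filter] at hB
      obtain ⟨hBp, hBn⟩ := hB
      rw [hpows, Finset.mem_powerset] at hBp
      have hmono := hψmono B B false true (le_refl B) hBp (fun _ => rfl)
      rcases hψ01 B true hBp with h | h <;> rcases hψ01 B false hBp with h' | h'
      · rw [h, h']; ring
      · rw [h, h'] at hmono; norm_num at hmono
      · exact absurd ⟨h, h'⟩ hBn
      · rw [h, h']; ring
    rw [← hK]
    rw [h1, h2, add_zero]
  have final : (μ S).toReal = ∑ B ∈ pows, (μ (E B)).toReal * (ψ B true - ψ B false) := by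
    calc (μ S).toReal = (μ (⋃ B ∈ K, E B)).toReal := by rw [measure_congr hae]
      _ = (∑ B ∈ K, μ (E B)).toReal := by rw [hU]
      _ = ∑ B ∈ K, (μ (E B)).toReal := ENNReal.toReal_sum fun B _ => measure_ne_top μ _
      _ = ∑ B ∈ pows, (μ (E B)).toReal * (ψ B true - ψ B false) := hsplit.symm
  simpa only [hE] using final
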